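/- Let a, b, c, d be complex sequences of length N, let x1,x2,x3,x4 ∈ {+1,−1} with x1·x2 + x3·x4 = 0, and define the length-4N sequences p = x1·a ∥ x2·b ∥ x3·a ∥ x4·b and q = x1·c ∥ x2·d ∥ x3·c ∥ x4·d. Then for every shift 0 ≤ τ ≤ N, the periodic cross-correlation satisfies R_{p,q}(τ) = 2·(C_{a,c}(τ) + C_{b,d}(τ)), where C_{a,c}(N) and C_{b,d}(N) are interpreted as 0. In particular, if C_{a,c}(τ) + C_{b,d}(τ) = 0 for all 0 ≤ τ ≤ N−1 (i.e., (c,d) is a Golay complementary mate of (a,b)), then R_{p,q}(τ) = 0 for all 0 ≤ τ ≤ N. -/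

import Mathlib

open Finset

/-- Aperiodic cross-correlation of length-`L` complex sequences at shift `0 ≤ τ`. -/
noncomputable def aCorr (a b : ℕ → ℂ) (L τ : ℕ) : ℂ :=
  ∑ k ∈ Finset.range (L - τ), a k * (starRingEnd ℂ) (b (k + τ))

/-- Periodic cross-correlation of length-`L` complex sequences at shift `τ`. -/
noncomputable def pCorr (a b : ℕ → ℂ) (L τ : ℕ) : ℂ :=
  ∑ k ∈ Finset.range L, a k * (starRingEnd ℂ) (b ((k + τ) % L))

/-- The length-`4N` sequence `x1·a ∥ x2·b ∥ x3·a ∥ x4·b`. -/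
noncomputable def quadConcat (N : ℕ) (x1 x2 x3 x4 : ℂ) (a b : ℕ → ℂ) : ℕ → ℂ :=
  fun n =>
    if n < N then x1 * a n
    else if n < 2 * N then x2 * b (n - N)
    else if n < 3 * N then x3 * a (n - 2 * N)
    else x4 * b (n - 3 * N)

private lemma block_split (N τ : ℕ) (hτ : τ ≤ N) (g : ℕ → ℂ) :
    ∑ i ∈ Finset.range N, g i =
      (∑ i ∈ Finset.range (N - τ), g i) + ∑ m ∈ Finset.range τ, g (N - τ + m) := by
  have h : N = (N - τ) + τ := by omega
  conv_lhs => rw [h]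
  rw [Finset.sum_range_add]

private lemma split4 (N : ℕ) (f : ℕ → ℂ) :
    ∑ k ∈ Finset.range (4 * N), f k =
      (∑ i ∈ Finset.range N, f i) + (∑ i ∈ Finset.range N, f (N + i)) +
      (∑ i ∈ Finset.range N, f (N + N + i)) + ∑ i ∈ Finset.range N, f (N + N + N + i) := by
  have h : 4 * N = N + N + N + N := by ring
  rw [h, Finset.sum_range_add, Finset.sum_range_add, Finset.sum_range_add]

theorem statement8 (N : ℕ) (a b c d : ℕ → ℂ) (x1 x2 x3 x4 : ℂ)
    (hx1 : x1 = 1 ∨ x1 = -1) (hx2 : x2 = 1 ∨ x2 = -1)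
    (hx3 : x3 = 1 ∨ x3 = -1) (hx4 : x4 = 1 ∨ x4 = -1)
    (hsum : x1 * x2 + x3 * x4 = 0)
    (p q : ℕ → ℂ)
    (hp : p = quadConcat N x1 x2 x3 x4 a b)
    (hq : q = quadConcat N x1 x2 x3 x4 c d) :
    ∀ τ, τ ≤ N →
      pCorr p q (4 * N) τ = 2 * (aCorr a c N τ + aCorr b d N τ) ∧
      ((∀ t, t ≤ N - 1 → aCorr a c N t + aCorr b d N t = 0) →
        pCorr p q (4 * N) τ = 0) := by
  subst hp hq
  have hc1 : (starRingEnd ℂ) x1 = x1 := by rcases hx1 with rfl | rfl <;> simp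
  have hc2 : (starRingEnd ℂ) x2 = x2 := by rcases hx2 with rfl | rfl <;> simp
  have hc3 : (starRingEnd ℂ) x3 = x3 := by rcases hx3 with rfl | rfl <;> simp
  have hc4 : (starRingEnd ℂ) x4 = x4 := by rcases hx4 with rfl | rfl <;> simp
  have hs1 : x1 * x1 = 1 := by rcases hx1 with rfl | rfl <;> norm_num
  have hs2 : x2 * x2 = 1 := by rcases hx2 with rfl | rfl <;> norm_num
  have hs3 : x3 * x3 = 1 := by rcases hx3 with rfl | rfl <;> norm_num
  have hs4 : x4 * x4 = 1 := by rcases hx4 with rfl | rfl <;> norm_num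
  have hsum2 : x2 * x3 + x4 * x1 = 0 := by
    rcases hx1 with rfl | rfl <;> rcases hx2 with rfl | rfl <;>
      rcases hx3 with rfl | rfl <;> rcases hx4 with rfl | rfl <;> revert hsum <;> norm_num
  intro τ hτ
  set P := quadConcat N x1 x2 x3 x4 a b with hP
  set Q := quadConcat N x1 x2 x3 x4 c d with hQ
  set T1 : ℂ := ∑ m ∈ Finset.range τ, a (N - τ + m) * (starRingEnd ℂ) (d m) with hT1
  set T2 : ℂ := ∑ m ∈ Finset.range τ, b (N - τ + m) * (starRingEnd ℂ) (c m) with hT2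
  have h0 : (∑ i ∈ Finset.range N, P i * (starRingEnd ℂ) (Q ((i + τ) % (4 * N)))) =
      aCorr a c N τ + x1 * x2 * T1 := by
    rw [block_split N τ hτ]
    congr 1
    · rw [aCorr]
      refine Finset.sum_congr rfl fun i hi => ?_
      rw [Finset.mem_range] at hi
      rw [Nat.mod_eq_of_lt (by omega : i + τ < 4 * N)]
      have hPe : P i = x1 * a i := by
        rw [hP, quadConcat]; rw [if_pos (by omega)]
      have hQe : Q (i + τ) = x1 * c (i + τ) := by
        rw [hQ, quadConcat]; rw [if_pos (by omega)]
      rw [hPe, hQe, map_mul, hc1]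
      linear_combination a i * (starRingEnd ℂ) (c (i + τ)) * hs1
    · rw [hT1, Finset.mul_sum]
      refine Finset.sum_congr rfl fun m hm => ?_
      rw [Finset.mem_range] at hm
      have harg : N - τ + m + τ = N + m := by omega
      rw [harg, Nat.mod_eq_of_lt (by omega : N + m < 4 * N)]
      have hPe : P (N - τ + m) = x1 * a (N - τ + m) := by
        rw [hP, quadConcat]; rw [if_pos (by omega)]
      have hQe : Q (N + m) = x2 * d m := by
        rw [hQ, quadConcat]; rw [if_neg (by omega), if_pos (by omega)]
        have : N + m - N = m := by omega
        rw [this]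
      rw [hPe, hQe, map_mul, hc2]
      ring
  have h1 : (∑ i ∈ Finset.range N, P (N + i) * (starRingEnd ℂ) (Q ((N + i + τ) % (4 * N)))) =
      aCorr b d N τ + x2 * x3 * T2 := by
    rw [block_split N τ hτ]
    congr 1
    · rw [aCorr]
      refine Finset.sum_congr rfl fun i hi => ?_
      rw [Finset.mem_range] at hi
      rw [Nat.mod_eq_of_lt (by omega : N + i + τ < 4 * N)]
      have hPe : P (N + i) = x2 * b i := by
        rw [hP, quadConcat]; rw [if_neg (by omega), if_pos (by omega)]
        have : N + i - N = i := by omega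
        rw [this]
      have hQe : Q (N + i + τ) = x2 * d (i + τ) := by
        rw [hQ, quadConcat]; rw [if_neg (by omega), if_pos (by omega)]
        have : N + i + τ - N = i + τ := by omega
        rw [this]
      rw [hPe, hQe, map_mul, hc2]
      linear_combination b i * (starRingEnd ℂ) (d (i + τ)) * hs2
    · rw [hT2, Finset.mul_sum]
      refine Finset.sum_congr rfl fun m hm => ?_
      rw [Finset.mem_range] at hm
      have harg : N + (N - τ + m) + τ = N + N + m := by omega
      rw [harg, Nat.mod_eq_of_lt (by omega : N + N + m < 4 * N)]
      have hPe : P (N + (N - τ + m)) = x2 * b (N - τ + m) := by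
        rw [hP, quadConcat]; rw [if_neg (by omega), if_pos (by omega)]
        have : N + (N - τ + m) - N = N - τ + m := by omega
        rw [this]
      have hQe : Q (N + N + m) = x3 * c m := by
        rw [hQ, quadConcat]
        rw [if_neg (by omega), if_neg (by omega), if_pos (by omega)]
        have : N + N + m - 2 * N = m := by omega
        rw [this]
      rw [hPe, hQe, map_mul, hc3]
      ring
  have h2 : (∑ i ∈ Finset.range N, P (N + N + i) * (starRingEnd ℂ) (Q ((N + N + i + τ) % (4 * N)))) =
      aCorr a c N τ + x3 * x4 * T1 := by
    rw [block_split N τ hτ]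
    congr 1
    · rw [aCorr]
      refine Finset.sum_congr rfl fun i hi => ?_
      rw [Finset.mem_range] at hi
      rw [Nat.mod_eq_of_lt (by omega : N + N + i + τ < 4 * N)]
      have hPe : P (N + N + i) = x3 * a i := by
        rw [hP, quadConcat]
        rw [if_neg (by omega), if_neg (by omega), if_pos (by omega)]
        have : N + N + i - 2 * N = i := by omega
        rw [this]
      have hQe : Q (N + N + i + τ) = x3 * c (i + τ) := by
        rw [hQ, quadConcat]
        rw [if_neg (by omega), if_neg (by omega), if_pos (by omega)]
        have : N + N + i + τ - 2 * N = i + τ := by omega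
        rw [this]
      rw [hPe, hQe, map_mul, hc3]
      linear_combination a i * (starRingEnd ℂ) (c (i + τ)) * hs3
    · rw [hT1, Finset.mul_sum]
      refine Finset.sum_congr rfl fun m hm => ?_
      rw [Finset.mem_range] at hm
      have harg : N + N + (N - τ + m) + τ = N + N + N + m := by omega
      rw [harg, Nat.mod_eq_of_lt (by omega : N + N + N + m < 4 * N)]
      have hPe : P (N + N + (N - τ + m)) = x3 * a (N - τ + m) := by
        rw [hP, quadConcat]
        rw [if_neg (by omega), if_neg (by omega), if_pos (by omega)]
        have : N + N + (N - τ + m) - 2 * N = N - τ + m := by omega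
        rw [this]
      have hQe : Q (N + N + N + m) = x4 * d m := by
        rw [hQ, quadConcat]
        rw [if_neg (by omega), if_neg (by omega), if_neg (by omega)]
        have : N + N + N + m - 3 * N = m := by omega
        rw [this]
      rw [hPe, hQe, map_mul, hc4]
      ring
  have h3 : (∑ i ∈ Finset.range N,
        P (N + N + N + i) * (starRingEnd ℂ) (Q ((N + N + N + i + τ) % (4 * N)))) =
      aCorr b d N τ + x4 * x1 * T2 := by
    rw [block_split N τ hτ]
    congr 1
    · rw [aCorr]
      refine Finset.sum_congr rfl fun i hi => ?_
      rw [Finset.mem_range] at hi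
      rw [Nat.mod_eq_of_lt (by omega : N + N + N + i + τ < 4 * N)]
      have hPe : P (N + N + N + i) = x4 * b i := by
        rw [hP, quadConcat]
        rw [if_neg (by omega), if_neg (by omega), if_neg (by omega)]
        have : N + N + N + i - 3 * N = i := by omega
        rw [this]
      have hQe : Q (N + N + N + i + τ) = x4 * d (i + τ) := by
        rw [hQ, quadConcat]
        rw [if_neg (by omega), if_neg (by omega), if_neg (by omega)]
        have : N + N + N + i + τ - 3 * N = i + τ := by omega
        rw [this]
      rw [hPe, hQe, map_mul, hc4]
      linear_combination b i * (starRingEnd ℂ) (d (i + τ)) * hs4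
    · rw [hT2, Finset.mul_sum]
      refine Finset.sum_congr rfl fun m hm => ?_
      rw [Finset.mem_range] at hm
      have harg : N + N + N + (N - τ + m) + τ = 4 * N + m := by omega
      rw [harg, Nat.add_mod_left, Nat.mod_eq_of_lt (by omega : m < 4 * N)]
      have hPe : P (N + N + N + (N - τ + m)) = x4 * b (N - τ + m) := by
        rw [hP, quadConcat]
        rw [if_neg (by omega), if_neg (by omega), if_neg (by omega)]
        have : N + N + N + (N - τ + m) - 3 * N = N - τ + m := by omega
        rw [this]
      have hQe : Q m = x1 * c m := by
        rw [hQ, quadConcat]; rw [if_pos (by omega)]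
      rw [hPe, hQe, map_mul, hc1]
      ring
  have hmain : pCorr P Q (4 * N) τ = 2 * (aCorr a c N τ + aCorr b d N τ) := by
    rw [pCorr, split4, h0, h1, h2, h3]
    linear_combination T1 * hsum + T2 * hsum2
  refine ⟨hmain, fun h => ?_⟩
  rw [hmain]
  rcases Nat.lt_or_ge τ N with hlt | hge
  · rw [h τ (by omega)]; ring
  · have : τ = N := le_antisymm hτ hge
    subst this
    simp [aCorr]
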